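/- The homology of the condensation of a homologically filtered chain complex is naturally isomorphic to the homology of the original complex: H_*(X̄) ≅ H_*(X). -/
import Mathlib


section

variable (X : ℕ → Type*) [∀ n, AddCommGroup (X n)]
variable (d : ∀ n, X (n + 1) →+ X n) (F : ℕ → ∀ n, AddSubgroup (X n))

/-- `F_{i-1}`, with the convention `F_{-1} = 0`. -/
def Fprev : ℕ → ∀ n, AddSubgroup (X n)
  | 0 => fun _ => ⊥
  | (i + 1) => F i

/-- The relative cycles: `Z_i = {x ∈ F_i X_i : dx ∈ F_{i-1} X_{i-1}}`. -/
def relZ : ∀ i, AddSubgroup (X i)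
  | 0 => F 0 0
  | (i + 1) => F (i + 1) (i + 1) ⊓ AddSubgroup.comap (d i) (F i i)

/-- The relative boundaries: `B_i = d(F_i X_{i+1}) + F_{i-1} X_i`. -/
def relB (i : ℕ) : AddSubgroup (X i) :=
  AddSubgroup.map (d i) (F i (i + 1)) ⊔ (Fprev X F i i)

/-- The degree-`i` group `X̄_i = H_i(F_iX/F_{i-1}X)` of the condensation. -/
abbrev condObj (i : ℕ) : Type _ :=
  (relZ X d F i) ⧸ ((relB X d F i).addSubgroupOf (relZ X d F i))

/-- If `d ∘ d = 0`, the differential carries relative cycles to relative cycles. -/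
theorem dZmem (hdd : ∀ n (x : X (n + 2)), d n (d (n + 1) x) = 0) {i : ℕ}
    (x : X (i + 1)) (hx : x ∈ relZ X d F (i + 1)) : d i x ∈ relZ X d F i := by
  rcases (AddSubgroup.mem_inf.mp hx) with ⟨h1, h2⟩
  cases i with
  | zero => exact h2
  | succ j =>
    refine AddSubgroup.mem_inf.mpr ⟨h2, ?_⟩
    simp only [AddSubgroup.mem_comap, hdd]
    exact zero_mem _

end

/-- The homology of a non-negatively graded chain complex `(G, δ)`:
`H_0 = G_0 / im δ_0` and `H_{i+1} = ker δ_i / im δ_{i+1}`. -/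
def homologyObj (G : ℕ → Type*) [∀ n, AddCommGroup (G n)]
    (δ : ∀ n, G (n + 1) →+ G n) : ∀ _ : ℕ, Type _
  | 0 => G 0 ⧸ (δ 0).range
  | (i + 1) => (δ i).ker ⧸ ((δ (i + 1)).range.addSubgroupOf (δ i).ker)

noncomputable instance homologyObjAddCommGroup (G : ℕ → Type*) [∀ n, AddCommGroup (G n)]
    (δ : ∀ n, G (n + 1) →+ G n) : ∀ i, AddCommGroup (homologyObj G δ i)
  | 0 => inferInstanceAs (AddCommGroup (G 0 ⧸ (δ 0).range))
  | (i + 1) =>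
    inferInstanceAs (AddCommGroup ((δ i).ker ⧸ ((δ (i + 1)).range.addSubgroupOf (δ i).ker)))

section

variable (X : ℕ → Type*) [∀ n, AddCommGroup (X n)]
variable (d : ∀ n, X (n + 1) →+ X n) (F : ℕ → ∀ n, AddSubgroup (X n))

variable (hmono : ∀ i n, F i n ≤ F (i + 1) n)
variable (hdd : ∀ n (x : X (n + 2)), d n (d (n + 1) x) = 0)
variable (hfilt0 : ∀ i, i ≠ 0 → ∀ x : X 0, x ∈ F i 0 →
      ∃ y ∈ F i 1, ∃ z ∈ Fprev X F i 0, x = d 0 y + z)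
variable (hfilt : ∀ i j, j + 1 ≠ i → ∀ x : X (j + 1), x ∈ F i (j + 1) →
      d j x ∈ Fprev X F i j →
      ∃ y ∈ F i (j + 2), ∃ z ∈ Fprev X F i (j + 1), x = d (j + 1) y + z)

include hmono in
theorem Fmono : ∀ {k i : ℕ}, k ≤ i → ∀ n, F k n ≤ F i n := by
  intro k i h
  induction h with
  | refl => exact fun n => le_rfl
  | step _ ih => exact fun n => (ih n).trans (hmono _ n)

include hmono hdd hfilt in
/-- A cycle of degree `j+1` lying in `F m` with `m ≤ j` is a boundary, with witness in `F m`. -/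
theorem killCycle : ∀ m, ∀ j (b : X (j + 1)), m ≤ j → b ∈ F m (j + 1) → d j b = 0 →
    ∃ y ∈ F m (j + 2), d (j + 1) y = b := by
  intro m
  induction m with
  | zero =>
    intro j b _ hb hdb
    obtain ⟨y, hy, z, hz, hbe⟩ := hfilt 0 j (by omega) b hb (by
      show d j b ∈ Fprev X F 0 j
      simp [Fprev, hdb])
    have hz0 : z = 0 := by simpa [Fprev] using hz
    exact ⟨y, hy, by rw [hbe, hz0, add_zero]⟩
  | succ m ih =>
    intro j b hm hb hdb
    obtain ⟨y, hy, z, hz, hbe⟩ := hfilt (m + 1) j (by omega) b hb (by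
      show d j b ∈ Fprev X F (m + 1) j
      simp only [Fprev]
      rw [hdb]; exact zero_mem _)
    have hz' : z ∈ F m (j + 1) := by simpa [Fprev] using hz
    have hdz : d j z = 0 := by
      have : z = b - d (j + 1) y := by rw [hbe]; abel
      rw [this, map_sub, hdb, hdd, sub_zero]
    obtain ⟨y', hy', hdy'⟩ := ih j z (by omega) hz' hdz
    refine ⟨y + y', add_mem hy (Fmono X F hmono (Nat.le_succ m) _ hy'), ?_⟩
    rw [map_add, hdy', ← hbe]

include hmono hdd hfilt in
/-- Any cycle of degree `j+1` is homologous to a cycle in `F (j+1)`. -/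
theorem descendCycle : ∀ k, ∀ j (c : X (j + 1)), c ∈ F k (j + 1) → d j c = 0 →
    ∃ c' ∈ F (j + 1) (j + 1), d j c' = 0 ∧ c - c' ∈ (d (j + 1)).range := by
  intro k
  induction k with
  | zero =>
    intro j c hc hdc
    exact ⟨c, Fmono X F hmono (Nat.zero_le _) _ hc, hdc, by rw [sub_self]; exact zero_mem _⟩
  | succ m ih =>
    intro j c hc hdc
    by_cases hle : m + 1 ≤ j + 1
    · exact ⟨c, Fmono X F hmono hle _ hc, hdc, by rw [sub_self]; exact zero_mem _⟩
    · obtain ⟨y, hy, z, hz, hce⟩ := hfilt (m + 1) j (by omega) c hc (by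
        show d j c ∈ Fprev X F (m + 1) j
        simp only [Fprev]; rw [hdc]; exact zero_mem _)
      have hz' : z ∈ F m (j + 1) := by simpa [Fprev] using hz
      have hdz : d j z = 0 := by
        have : z = c - d (j + 1) y := by rw [hce]; abel
        rw [this, map_sub, hdc, hdd, sub_zero]
      obtain ⟨c', hc', hdc', hw⟩ := ih j z hz' hdz
      refine ⟨c', hc', hdc', ?_⟩
      have : c - c' = d (j + 1) y + (z - c') := by rw [hce]; abel
      rw [this]
      exact add_mem ⟨y, rfl⟩ hw

include hfilt0 in
/-- Any element of degree `0` is homologous to one in `F 0`. -/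
theorem descendCycle0 : ∀ k, ∀ c : X 0, c ∈ F k 0 →
    ∃ c' ∈ F 0 0, c - c' ∈ (d 0).range := by
  intro k
  induction k with
  | zero => exact fun c hc => ⟨c, hc, by rw [sub_self]; exact zero_mem _⟩
  | succ m ih =>
    intro c hc
    obtain ⟨y, hy, z, hz, hce⟩ := hfilt0 (m + 1) (by omega) c hc
    have hz' : z ∈ F m 0 := by simpa [Fprev] using hz
    obtain ⟨c', hc', hw⟩ := ih z hz'
    refine ⟨c', hc', ?_⟩
    have : c - c' = d 0 y + (z - c') := by rw [hce]; abel
    rw [this]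
    exact add_mem ⟨y, rfl⟩ hw

include hmono hdd hfilt in
/-- A boundary landing in `F i i` is the boundary of a relative cycle. -/
theorem boundaryRep : ∀ k, ∀ i (w : X (i + 1)), w ∈ F k (i + 1) → d i w ∈ F i i →
    ∃ w' ∈ relZ X d F (i + 1), d i w' = d i w := by
  intro k
  induction k with
  | zero =>
    intro i w hw hdw
    exact ⟨w, AddSubgroup.mem_inf.mpr ⟨Fmono X F hmono (Nat.zero_le _) _ hw, hdw⟩, rfl⟩
  | succ m ih =>
    intro i w hw hdw
    by_cases hle : m + 1 ≤ i + 1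
    · exact ⟨w, AddSubgroup.mem_inf.mpr ⟨Fmono X F hmono hle _ hw, hdw⟩, rfl⟩
    · obtain ⟨y, hy, z, hz, hwe⟩ := hfilt (m + 1) i (by omega) w hw (by
        show d i w ∈ Fprev X F (m + 1) i
        simp only [Fprev]
        exact Fmono X F hmono (by omega) _ hdw)
      have hz' : z ∈ F m (i + 1) := by simpa [Fprev] using hz
      have hdz : d i z = d i w := by
        have : z = w - d (i + 1) y := by rw [hwe]; abel
        rw [this, map_sub, hdd, sub_zero]
      obtain ⟨w', hw', hdw'⟩ := ih i z hz' (hdz ▸ hdw)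
      exact ⟨w', hw', by rw [hdw', hdz]⟩

include hmono hdd hfilt in
/-- An `x` whose boundary lies in `Fprev` can be corrected by an element of `F j`
to a strict cycle. -/
theorem killFprev : ∀ j (x : X (j + 1)), d j x ∈ Fprev X F j j →
    ∃ y ∈ F j (j + 1), d j y = d j x := by
  intro j x hx
  cases j with
  | zero =>
    refine ⟨0, zero_mem _, ?_⟩
    have : d 0 x = 0 := by simpa [Fprev] using hx
    simp [this]
  | succ m =>
    have hb : d (m + 1) x ∈ F m (m + 1) := by simpa [Fprev] using hx
    obtain ⟨y, hy, hdy⟩ := killCycle X d F hmono hdd hfilt m m (d (m + 1) x) le_rfl hb (hdd m x)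
    exact ⟨y, Fmono X F hmono (Nat.le_succ m) _ hy, hdy⟩

theorem mem_relB_iff {i : ℕ} (x : X i) : x ∈ relB X d F i ↔
    ∃ u ∈ F i (i + 1), ∃ z ∈ Fprev X F i i, x = d i u + z := by
  constructor
  · intro h
    obtain ⟨a, ha, z, hz, hxe⟩ := AddSubgroup.mem_sup.mp h
    obtain ⟨u, hu, rfl⟩ := AddSubgroup.mem_map.mp ha
    exact ⟨u, hu, z, hz, hxe.symm⟩
  · rintro ⟨u, hu, z, hz, rfl⟩
    exact AddSubgroup.mem_sup.mpr ⟨d i u, AddSubgroup.mem_map.mpr ⟨u, hu, rfl⟩, z, hz, rfl⟩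

end

/-- The homology of the condensation of a homologically filtered chain complex is
(naturally) isomorphic to the homology of the original complex: `H_*(X̄) ≅ H_*(X)`. -/
theorem condensation_homology_iso
    (X : ℕ → Type*) [∀ n, AddCommGroup (X n)]
    (d : ∀ n, X (n + 1) →+ X n)
    (hdd : ∀ n (x : X (n + 2)), d n (d (n + 1) x) = 0)
    (F : ℕ → ∀ n, AddSubgroup (X n))
    (hmono : ∀ i n, F i n ≤ F (i + 1) n)
    (hexh : ∀ n (x : X n), ∃ i, x ∈ F i n)
    (hcompat : ∀ i n (x : X (n + 1)), x ∈ F i (n + 1) → d n x ∈ F i n)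
    -- homological filtration: `H_j(F_iX/F_{i-1}X) = 0` for `j ≠ i`
    (hfilt0 : ∀ i, i ≠ 0 → ∀ x : X 0, x ∈ F i 0 →
      ∃ y ∈ F i 1, ∃ z ∈ Fprev X F i 0, x = d 0 y + z)
    (hfilt : ∀ i j, j + 1 ≠ i → ∀ x : X (j + 1), x ∈ F i (j + 1) →
      d j x ∈ Fprev X F i j →
      ∃ y ∈ F i (j + 2), ∃ z ∈ Fprev X F i (j + 1), x = d (j + 1) y + z)
    -- `bd` is the boundary operator of the condensation, induced by `d`
    (bd : ∀ i, condObj X d F (i + 1) →+ condObj X d F i)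
    (hbd : ∀ (i : ℕ) (x : relZ X d F (i + 1)),
      bd i (QuotientAddGroup.mk x)
        = QuotientAddGroup.mk ⟨d i x.1, dZmem X d F hdd x.1 x.2⟩) :
    ∀ i, Nonempty (homologyObj (condObj X d F) bd i ≃+ homologyObj X d i) := by
  intro i
  cases i with
  | zero =>
    -- `H_0`: compare `X 0 ⧸ im (d 0)` with `X̄_0 ⧸ im (bd 0)` through `relZ X d F 0 = F 0 0`.
    let φ : (relZ X d F 0) →+ X 0 ⧸ (d 0).range :=
      (QuotientAddGroup.mk' (d 0).range).comp (relZ X d F 0).subtype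
    let ψ : (relZ X d F 0) →+ condObj X d F 0 ⧸ (bd 0).range :=
      (QuotientAddGroup.mk' (bd 0).range).comp
        (QuotientAddGroup.mk' ((relB X d F 0).addSubgroupOf (relZ X d F 0)))
    have hφ : Function.Surjective φ := by
      intro q
      obtain ⟨c, rfl⟩ := QuotientAddGroup.mk'_surjective _ q
      obtain ⟨k, hk⟩ := hexh 0 c
      obtain ⟨c', hc', hw⟩ := descendCycle0 X d F hfilt0 k c hk
      refine ⟨⟨c', hc'⟩, ?_⟩
      show ((c' : X 0) : X 0 ⧸ (d 0).range) = ((c : X 0) : X 0 ⧸ (d 0).range)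
      rw [QuotientAddGroup.eq, neg_add_eq_sub]
      exact hw
    have hψ : Function.Surjective ψ :=
      (QuotientAddGroup.mk'_surjective _).comp (QuotientAddGroup.mk'_surjective _)
    have hker : ψ.ker = φ.ker := by
      ext x
      have hφ0 : x ∈ φ.ker ↔ (x : X 0) ∈ (d 0).range := by
        rw [AddMonoidHom.mem_ker]
        show ((x : X 0) : X 0 ⧸ (d 0).range) = 0 ↔ _
        exact QuotientAddGroup.eq_zero_iff _
      have hψ0 : x ∈ ψ.ker ↔
          (QuotientAddGroup.mk x : condObj X d F 0) ∈ (bd 0).range := by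
        rw [AddMonoidHom.mem_ker]
        show ((QuotientAddGroup.mk x : condObj X d F 0) :
          condObj X d F 0 ⧸ (bd 0).range) = 0 ↔ _
        exact QuotientAddGroup.eq_zero_iff _
      rw [hφ0, hψ0]
      constructor
      · rintro ⟨ξ, hξ⟩
        obtain ⟨w, rfl⟩ := QuotientAddGroup.mk'_surjective _ ξ
        rw [QuotientAddGroup.mk'_apply, hbd 0 w] at hξ
        rw [QuotientAddGroup.eq] at hξ
        rw [AddSubgroup.mem_addSubgroupOf] at hξ
        rw [mem_relB_iff] at hξ
        obtain ⟨u, hu, z, hz, hze⟩ := hξ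
        have hz0 : z = 0 := by simpa [Fprev] using hz
        refine ⟨(w : X 1) + u, ?_⟩
        have hze' : -(d 0 (w : X 1)) + (x : X 0) = d 0 u + z := hze
        rw [map_add]
        rw [hz0, add_zero] at hze'
        rw [← hze']
        abel
      · rintro ⟨w, hw⟩
        have hdw : d 0 w ∈ F 0 0 := by rw [hw]; exact x.2
        obtain ⟨k, hk⟩ := hexh 1 w
        obtain ⟨w', hw', hdw'⟩ := boundaryRep X d F hmono hdd hfilt k 0 w hk hdw
        refine ⟨QuotientAddGroup.mk ⟨w', hw'⟩, ?_⟩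
        rw [hbd 0 ⟨w', hw'⟩]
        refine congrArg QuotientAddGroup.mk (Subtype.ext ?_)
        show d 0 w' = (x : X 0)
        rw [hdw', hw]
    exact ⟨((QuotientAddGroup.quotientKerEquivOfSurjective ψ hψ).symm.trans
      (QuotientAddGroup.quotientAddEquivOfEq hker)).trans
      (QuotientAddGroup.quotientKerEquivOfSurjective φ hφ)⟩
  | succ j =>
    let K : AddSubgroup (X (j + 1)) := F (j + 1) (j + 1) ⊓ (d j).ker
    have hKZ : K ≤ relZ X d F (j + 1) := by
      intro x hx
      obtain ⟨h1, h2⟩ := AddSubgroup.mem_inf.mp hx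
      refine AddSubgroup.mem_inf.mpr ⟨h1, ?_⟩
      show d j x ∈ F j j
      rw [AddMonoidHom.mem_ker.mp h2]
      exact zero_mem _
    let φ : K →+ (d j).ker ⧸ ((d (j + 1)).range.addSubgroupOf (d j).ker) :=
      (QuotientAddGroup.mk' _).comp (AddSubgroup.inclusion inf_le_right)
    have hψ0mem : ∀ x : K, (QuotientAddGroup.mk' ((relB X d F (j + 1)).addSubgroupOf
        (relZ X d F (j + 1)))).comp (AddSubgroup.inclusion hKZ) x ∈ (bd j).ker := by
      intro x
      rw [AddMonoidHom.mem_ker]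
      show bd j (QuotientAddGroup.mk (AddSubgroup.inclusion hKZ x)) = 0
      rw [hbd j (AddSubgroup.inclusion hKZ x)]
      have heq : (⟨d j ((AddSubgroup.inclusion hKZ x : relZ X d F (j + 1)) : X (j + 1)),
          dZmem X d F hdd _ (AddSubgroup.inclusion hKZ x).2⟩ : relZ X d F j) = 0 :=
        Subtype.ext (AddMonoidHom.mem_ker.mp x.2.2)
      rw [heq]
      rfl
    let ψ0 : K →+ (bd j).ker := AddMonoidHom.codRestrict _ _ hψ0mem
    let ψ : K →+ (bd j).ker ⧸ ((bd (j + 1)).range.addSubgroupOf (bd j).ker) :=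
      (QuotientAddGroup.mk' _).comp ψ0
    have hφ : Function.Surjective φ := by
      intro q
      obtain ⟨⟨c, hcker⟩, rfl⟩ := QuotientAddGroup.mk'_surjective _ q
      obtain ⟨k, hk⟩ := hexh (j + 1) c
      obtain ⟨c', hc', hdc', hw⟩ := descendCycle X d F hmono hdd hfilt k j c hk
        (AddMonoidHom.mem_ker.mp hcker)
      refine ⟨⟨c', AddSubgroup.mem_inf.mpr ⟨hc', AddMonoidHom.mem_ker.mpr hdc'⟩⟩, ?_⟩
      show QuotientAddGroup.mk _ = QuotientAddGroup.mk _
      rw [QuotientAddGroup.eq, AddSubgroup.mem_addSubgroupOf]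
      show -c' + c ∈ (d (j + 1)).range
      rw [neg_add_eq_sub]
      exact hw
    have hψ : Function.Surjective ψ := by
      intro q
      obtain ⟨⟨ξ, hξ⟩, rfl⟩ := QuotientAddGroup.mk'_surjective _ q
      obtain ⟨zz, rfl⟩ := QuotientAddGroup.mk'_surjective _ ξ
      obtain ⟨hx1, hx2⟩ := AddSubgroup.mem_inf.mp zz.2
      have hx2' : d j (zz : X (j + 1)) ∈ F j j := hx2
      have hξ' : bd j (QuotientAddGroup.mk zz) = 0 := AddMonoidHom.mem_ker.mp hξ
      have h1 : (QuotientAddGroup.mk ⟨d j (zz : X (j + 1)), dZmem X d F hdd _ zz.2⟩ :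
          condObj X d F j) = 0 := by rw [← hbd j zz]; exact hξ'
      have h3 : d j (zz : X (j + 1)) ∈ relB X d F j :=
        AddSubgroup.mem_addSubgroupOf.mp ((QuotientAddGroup.eq_zero_iff _).mp h1)
      obtain ⟨u, hu, b, hb, hbe⟩ := (mem_relB_iff X d F _).mp h3
      have hdx1 : d j ((zz : X (j + 1)) - u) = b := by
        rw [map_sub, hbe]; abel
      obtain ⟨y, hy, hdy⟩ := killFprev X d F hmono hdd hfilt j ((zz : X (j + 1)) - u)
        (by rw [hdx1]; exact hb)
      set c : X (j + 1) := (zz : X (j + 1)) - u - y with hcdef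
      have hdc : d j c = 0 := by
        rw [hcdef, map_sub, hdy, sub_self]
      have hcF : c ∈ F (j + 1) (j + 1) :=
        sub_mem (sub_mem hx1 (hmono j _ hu)) (hmono j _ hy)
      have hcK : c ∈ K := AddSubgroup.mem_inf.mpr ⟨hcF, AddMonoidHom.mem_ker.mpr hdc⟩
      refine ⟨⟨c, hcK⟩, ?_⟩
      have hmkeq : (QuotientAddGroup.mk (AddSubgroup.inclusion hKZ ⟨c, hcK⟩) :
          condObj X d F (j + 1)) = QuotientAddGroup.mk zz := by
        rw [QuotientAddGroup.eq, AddSubgroup.mem_addSubgroupOf]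
        show -c + (zz : X (j + 1)) ∈ relB X d F (j + 1)
        have : -c + (zz : X (j + 1)) = d (j + 1) 0 + (u + y) := by
          rw [map_zero, hcdef]; abel
        rw [mem_relB_iff]
        exact ⟨0, zero_mem _, u + y, add_mem hu hy, this⟩
      show QuotientAddGroup.mk (ψ0 ⟨c, hcK⟩) = QuotientAddGroup.mk (⟨_, hξ⟩ : (bd j).ker)
      exact congrArg _ (Subtype.ext hmkeq)
    have hker : ψ.ker = φ.ker := by
      ext x
      have hφ0 : x ∈ φ.ker ↔ (x : X (j + 1)) ∈ (d (j + 1)).range := by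
        rw [AddMonoidHom.mem_ker]
        constructor
        · intro h
          have h' : (QuotientAddGroup.mk (AddSubgroup.inclusion inf_le_right x) :
              (d j).ker ⧸ (d (j + 1)).range.addSubgroupOf (d j).ker) = 0 := h
          have h'' := (QuotientAddGroup.eq_zero_iff
            (AddSubgroup.inclusion inf_le_right x)).mp h'
          exact AddSubgroup.mem_addSubgroupOf.mp h''
        · intro h
          exact (QuotientAddGroup.eq_zero_iff
            ((AddSubgroup.inclusion inf_le_right x : (d j).ker))).mpr
            (AddSubgroup.mem_addSubgroupOf.mpr h)
      have hψ0 : x ∈ ψ.ker ↔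
          (QuotientAddGroup.mk (AddSubgroup.inclusion hKZ x) : condObj X d F (j + 1))
            ∈ (bd (j + 1)).range := by
        rw [AddMonoidHom.mem_ker]
        constructor
        · intro h
          have h' : (QuotientAddGroup.mk (ψ0 x) :
              (bd j).ker ⧸ (bd (j + 1)).range.addSubgroupOf (bd j).ker) = 0 := h
          have h'' := (QuotientAddGroup.eq_zero_iff (ψ0 x)).mp h'
          exact AddSubgroup.mem_addSubgroupOf.mp h''
        · intro h
          exact (QuotientAddGroup.eq_zero_iff (ψ0 x)).mpr
            (AddSubgroup.mem_addSubgroupOf.mpr h)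
      rw [hφ0, hψ0]
      constructor
      · rintro ⟨ξ, hξ⟩
        obtain ⟨w, rfl⟩ := QuotientAddGroup.mk'_surjective _ ξ
        rw [QuotientAddGroup.mk'_apply, hbd (j + 1) w, QuotientAddGroup.eq,
          AddSubgroup.mem_addSubgroupOf, mem_relB_iff] at hξ
        obtain ⟨u, hu, b, hb, hbe⟩ := hξ
        have hbe' : -(d (j + 1) (w : X (j + 2))) + (x : X (j + 1))
            = d (j + 1) u + b := hbe
        have hb' : b ∈ F j (j + 1) := hb
        have h2 : b = -(d (j + 1) (w : X (j + 2))) + (x : X (j + 1)) - d (j + 1) u := by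
          rw [hbe']; abel
        have hdb : d j b = 0 := by
          rw [h2, map_sub, map_add, map_neg, hdd, hdd, neg_zero, zero_add, sub_zero]
          exact AddMonoidHom.mem_ker.mp x.2.2
        obtain ⟨y, hy, hdy⟩ := killCycle X d F hmono hdd hfilt j j b le_rfl hb' hdb
        refine ⟨(w : X (j + 2)) + u + y, ?_⟩
        rw [map_add, map_add, hdy, h2]
        abel
      · rintro ⟨w, hw⟩
        have hdw : d (j + 1) w ∈ F (j + 1) (j + 1) := by rw [hw]; exact x.2.1
        obtain ⟨k, hk⟩ := hexh (j + 2) w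
        obtain ⟨w', hw', hdw'⟩ := boundaryRep X d F hmono hdd hfilt k (j + 1) w hk hdw
        refine ⟨QuotientAddGroup.mk ⟨w', hw'⟩, ?_⟩
        rw [hbd (j + 1) ⟨w', hw'⟩]
        refine congrArg QuotientAddGroup.mk (Subtype.ext ?_)
        show d (j + 1) w' = ((AddSubgroup.inclusion hKZ x : relZ X d F (j + 1)) : X (j + 1))
        rw [hdw', hw]
        rfl
    exact ⟨((QuotientAddGroup.quotientKerEquivOfSurjective ψ hψ).symm.trans
      (QuotientAddGroup.quotientAddEquivOfEq hker)).trans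
      (QuotientAddGroup.quotientKerEquivOfSurjective φ hφ)⟩
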